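/- Let A ∈ ℝ^{m×n}, C ∈ ℝ^{p×n}, b ∈ ℝᵐ, and set x₂ = (P_{R(G)} − C_A† C) A† b with G = AᵀA + CᵀC. Then C x₂ = 0. -/

import Mathlib

open Matrix

set_option maxHeartbeats 1000000 in
/-- With `x₂ = (P_{R(G)} − C_A† C) A† b`, `G = AᵀA + CᵀC`, one has `C x₂ = 0`. -/
theorem x2_in_null_C (m n p : ℕ) (A : Matrix (Fin m) (Fin n) ℝ)
    (C : Matrix (Fin p) (Fin n) ℝ) (b : EuclideanSpace ℝ (Fin m))
    (Adag_b : EuclideanSpace ℝ (Fin n))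
    (hAdag_min : ∀ y, ‖Matrix.toEuclideanLin A Adag_b - b‖ ≤ ‖Matrix.toEuclideanLin A y - b‖)
    (hAdag_norm : ∀ y, (∀ z, ‖Matrix.toEuclideanLin A y - b‖ ≤ ‖Matrix.toEuclideanLin A z - b‖) →
      ‖Adag_b‖ ≤ ‖y‖)
    (CAdag : EuclideanSpace ℝ (Fin p) → EuclideanSpace ℝ (Fin n))
    (hCAdag : ∀ d : EuclideanSpace ℝ (Fin p),
      (∀ y, ‖Matrix.toEuclideanLin C (CAdag d) - d‖ ≤ ‖Matrix.toEuclideanLin C y - d‖) ∧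
      (∀ y, (∀ z, ‖Matrix.toEuclideanLin C y - d‖ ≤ ‖Matrix.toEuclideanLin C z - d‖) →
        ‖Matrix.toEuclideanLin A (CAdag d)‖ ≤ ‖Matrix.toEuclideanLin A y‖) ∧
      (∀ y, ((∀ z, ‖Matrix.toEuclideanLin C y - d‖ ≤ ‖Matrix.toEuclideanLin C z - d‖) ∧
          (∀ z, (∀ w, ‖Matrix.toEuclideanLin C z - d‖ ≤ ‖Matrix.toEuclideanLin C w - d‖) →
            ‖Matrix.toEuclideanLin A y‖ ≤ ‖Matrix.toEuclideanLin A z‖)) → ‖CAdag d‖ ≤ ‖y‖)) :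
    Matrix.toEuclideanLin C
        ((↑(Submodule.orthogonalProjection
              (LinearMap.range (Matrix.toEuclideanLin (Aᵀ * A + Cᵀ * C))) Adag_b) :
            EuclideanSpace ℝ (Fin n)) - CAdag (Matrix.toEuclideanLin C Adag_b)) = 0 := by
  set d := Matrix.toEuclideanLin C Adag_b with hd
  -- C (CAdag d) = d
  have h1 : Matrix.toEuclideanLin C (CAdag d) = d := by
    have h := (hCAdag d).1 Adag_b
    rw [← hd, sub_self, norm_zero] at h
    exact sub_eq_zero.mp (norm_eq_zero.mp (le_antisymm h (norm_nonneg _)))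
  -- the residual of the projection is killed by C
  set K := LinearMap.range (Matrix.toEuclideanLin (Aᵀ * A + Cᵀ * C)) with hK
  set v : EuclideanSpace ℝ (Fin n) :=
    Adag_b - ↑(Submodule.orthogonalProjection K Adag_b) with hv
  have hvmem : v ∈ Kᗮ := Submodule.sub_starProjection_mem_orthogonal (K := K) Adag_b
  have hGv : inner ℝ (Matrix.toEuclideanLin (Aᵀ * A + Cᵀ * C) v) v = (0 : ℝ) := by
    exact hvmem (Matrix.toEuclideanLin (Aᵀ * A + Cᵀ * C) v) ⟨v, rfl⟩
  have hsplit : Matrix.toEuclideanLin (Aᵀ * A + Cᵀ * C) v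
      = Matrix.toEuclideanLin Aᵀ (Matrix.toEuclideanLin A v)
        + Matrix.toEuclideanLin Cᵀ (Matrix.toEuclideanLin C v) := by
    rw [map_add]
    congr 1 <;> simp [toEuclideanLin_apply, mulVec_mulVec]
  have hadjA : Matrix.toEuclideanLin Aᵀ = LinearMap.adjoint (Matrix.toEuclideanLin A) := by
    rw [← conjTranspose_eq_transpose_of_trivial, Matrix.toEuclideanLin_conjTranspose_eq_adjoint]
  have hadjC : Matrix.toEuclideanLin Cᵀ = LinearMap.adjoint (Matrix.toEuclideanLin C) := by
    rw [← conjTranspose_eq_transpose_of_trivial, Matrix.toEuclideanLin_conjTranspose_eq_adjoint]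
  have hzero : (‖Matrix.toEuclideanLin A v‖ : ℝ)^2 + ‖Matrix.toEuclideanLin C v‖^2 = 0 := by
    have : inner ℝ (Matrix.toEuclideanLin (Aᵀ * A + Cᵀ * C) v) v
        = (‖Matrix.toEuclideanLin A v‖ : ℝ)^2 + ‖Matrix.toEuclideanLin C v‖^2 := by
      rw [hsplit, inner_add_left, hadjA, hadjC, LinearMap.adjoint_inner_left,
        LinearMap.adjoint_inner_left, real_inner_self_eq_norm_sq, real_inner_self_eq_norm_sq]
    rw [← this, hGv]
  have hCv : Matrix.toEuclideanLin C v = 0 := by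
    have h2 : (‖Matrix.toEuclideanLin C v‖ : ℝ)^2 = 0 := by nlinarith [sq_nonneg ‖Matrix.toEuclideanLin A v‖, sq_nonneg ‖Matrix.toEuclideanLin C v‖]
    simpa using pow_eq_zero_iff (n := 2) (by norm_num) |>.mp h2
  calc Matrix.toEuclideanLin C
        ((↑(Submodule.orthogonalProjection K Adag_b) : EuclideanSpace ℝ (Fin n)) - CAdag d)
      = Matrix.toEuclideanLin C (↑(Submodule.orthogonalProjection K Adag_b)) - Matrix.toEuclideanLin C (CAdag d) := by
        rw [map_sub]
    _ = (d - Matrix.toEuclideanLin C v) - d := by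
        rw [h1, hv, map_sub, hd]; abel
    _ = 0 := by rw [hCv]; abel
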